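/- For n×n positive definite complex matrices A, B, n×n positive semidefinite complex matrices C, D, and an n×n Hermitian complex matrix X, one has Tr[X A⁻¹ X B⁻¹] ≥ Tr[X (A+C)⁻¹ X (B+D)⁻¹], where both traces are real numbers. -/

import Mathlib

set_option maxHeartbeats 1000000

open Matrix ComplexOrder

lemma psd_trace_nonneg {n : ℕ} {N : Matrix (Fin n) (Fin n) ℂ} (h : N.PosSemidef) :
    0 ≤ N.trace := by
  rw [Matrix.trace]
  apply Finset.sum_nonneg
  intro i _
  have := h.dotProduct_mulVec_nonneg (Pi.single i 1)
  simpa [Matrix.mulVec_single, dotProduct, Pi.single_apply, apply_ite, Matrix.diag] using this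

lemma trace_psd_mul_nonneg {n : ℕ} {M Q : Matrix (Fin n) (Fin n) ℂ}
    (hM : M.PosSemidef) (hQ : Q.PosSemidef) : 0 ≤ (M * Q).trace := by
  obtain ⟨B, rfl⟩ : ∃ B : Matrix (Fin n) (Fin n) ℂ, M = Bᴴ * B := by
    open scoped MatrixOrder in exact CStarAlgebra.nonneg_iff_eq_star_mul_self.mp hM.nonneg
  have h1 : (Bᴴ * B * Q).trace = (B * Q * Bᴴ).trace := by
    rw [Matrix.mul_assoc, Matrix.trace_mul_comm, Matrix.mul_assoc]
  rw [h1]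
  exact psd_trace_nonneg (hQ.mul_mul_conjTranspose_same B)

lemma inv_sub_inv_psd {n : ℕ} {A C : Matrix (Fin n) (Fin n) ℂ}
    (hA : A.PosDef) (hC : C.PosSemidef) : (A⁻¹ - (A + C)⁻¹).PosSemidef := by
  have hS : (A + C).PosDef := hA.add_posSemidef hC
  have hAu : IsUnit A.det := hA.isUnit.map detMonoidHom
  have hSu : IsUnit (A + C).det := hS.isUnit.map detMonoidHom
  have h4 : A⁻¹ - (A + C)⁻¹ = (A + C)⁻¹ * C * A⁻¹ := by
    calc A⁻¹ - (A + C)⁻¹ = (A + C)⁻¹ * (A + C) * A⁻¹ - (A + C)⁻¹ * (A * A⁻¹) := by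
          rw [Matrix.nonsing_inv_mul _ hSu, one_mul, Matrix.mul_nonsing_inv A hAu, mul_one]
      _ = (A + C)⁻¹ * ((A + C) * A⁻¹) - (A + C)⁻¹ * (A * A⁻¹) := by rw [Matrix.mul_assoc]
      _ = (A + C)⁻¹ * ((A + C) * A⁻¹ - A * A⁻¹) := by rw [Matrix.mul_sub]
      _ = (A + C)⁻¹ * (((A + C) - A) * A⁻¹) := by rw [Matrix.sub_mul]
      _ = (A + C)⁻¹ * (C * A⁻¹) := by rw [add_sub_cancel_left]
      _ = (A + C)⁻¹ * C * A⁻¹ := by rw [Matrix.mul_assoc]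
  have h2 : C + C * A⁻¹ * C = C * A⁻¹ * (A + C) := by
    rw [Matrix.mul_add, Matrix.mul_assoc C A⁻¹ A, Matrix.nonsing_inv_mul A hAu, mul_one]
  have key : A⁻¹ - (A + C)⁻¹ = (A + C)⁻¹ * (C + C * A⁻¹ * C) * (A + C)⁻¹ := by
    have h5 : C * A⁻¹ * (A + C) * (A + C)⁻¹ = C * A⁻¹ := by
      rw [Matrix.mul_assoc (C * A⁻¹), Matrix.mul_nonsing_inv _ hSu, mul_one]
    rw [h2, h4, Matrix.mul_assoc ((A + C)⁻¹) (C * A⁻¹ * (A + C)) ((A + C)⁻¹),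
      h5]
    rw [Matrix.mul_assoc]
  have hmid : (C + C * A⁻¹ * C).PosSemidef := by
    have : (Cᴴ * A⁻¹ * C).PosSemidef := hA.inv.posSemidef.conjTranspose_mul_mul_same C
    rw [hC.isHermitian.eq] at this
    exact hC.add this
  have hSinvH : ((A + C)⁻¹)ᴴ = (A + C)⁻¹ := hS.inv.isHermitian.eq
  rw [key]
  nth_rewrite 1 [← hSinvH]
  exact hmid.conjTranspose_mul_mul_same ((A + C)⁻¹)

lemma trace_xpxq_nonneg {n : ℕ} {P Q X : Matrix (Fin n) (Fin n) ℂ}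
    (hP : P.PosSemidef) (hQ : Q.PosSemidef) (hX : X.IsHermitian) :
    0 ≤ (X * P * X * Q).trace := by
  have h1 : (X * P * X).PosSemidef := by
    have := hP.conjTranspose_mul_mul_same X
    rwa [hX.eq] at this
  exact trace_psd_mul_nonneg h1 hQ

theorem trace_lemma_BLD {n : ℕ} (A B C D X : Matrix (Fin n) (Fin n) ℂ)
    (hA : A.PosDef) (hB : B.PosDef) (hC : C.PosSemidef) (hD : D.PosSemidef)
    (hX : X.IsHermitian) :
    ((X * A⁻¹ * X * B⁻¹).trace).im = 0 ∧
    ((X * (A + C)⁻¹ * X * (B + D)⁻¹).trace).im = 0 ∧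
    ((X * A⁻¹ * X * B⁻¹).trace).re ≥ ((X * (A + C)⁻¹ * X * (B + D)⁻¹).trace).re := by
  have hS : (A + C).PosDef := hA.add_posSemidef hC
  have hT : (B + D).PosDef := hB.add_posSemidef hD
  have h1 : 0 ≤ (X * A⁻¹ * X * B⁻¹).trace :=
    trace_xpxq_nonneg hA.inv.posSemidef hB.inv.posSemidef hX
  have h2 : 0 ≤ (X * (A + C)⁻¹ * X * (B + D)⁻¹).trace :=
    trace_xpxq_nonneg hS.inv.posSemidef hT.inv.posSemidef hX
  have hd1 : 0 ≤ (X * (A⁻¹ - (A + C)⁻¹) * X * B⁻¹).trace :=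
    trace_xpxq_nonneg (inv_sub_inv_psd hA hC) hB.inv.posSemidef hX
  have hd2 : 0 ≤ (X * (A + C)⁻¹ * X * (B⁻¹ - (B + D)⁻¹)).trace :=
    trace_xpxq_nonneg hS.inv.posSemidef (inv_sub_inv_psd hB hD) hX
  have e1 : X * (A⁻¹ - (A + C)⁻¹) * X * B⁻¹
      = X * A⁻¹ * X * B⁻¹ - X * (A + C)⁻¹ * X * B⁻¹ := by
    rw [Matrix.mul_sub, Matrix.sub_mul, Matrix.sub_mul]
  have e2 : X * (A + C)⁻¹ * X * (B⁻¹ - (B + D)⁻¹)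
      = X * (A + C)⁻¹ * X * B⁻¹ - X * (A + C)⁻¹ * X * (B + D)⁻¹ := by
    rw [Matrix.mul_sub]
  have hsum : (X * (A⁻¹ - (A + C)⁻¹) * X * B⁻¹).trace
      + (X * (A + C)⁻¹ * X * (B⁻¹ - (B + D)⁻¹)).trace
      = (X * A⁻¹ * X * B⁻¹).trace - (X * (A + C)⁻¹ * X * (B + D)⁻¹).trace := by
    rw [e1, e2, Matrix.trace_sub, Matrix.trace_sub]
    ring
  have hdiff : 0 ≤ (X * A⁻¹ * X * B⁻¹).trace - (X * (A + C)⁻¹ * X * (B + D)⁻¹).trace := by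
    rw [← hsum]; exact add_nonneg hd1 hd2
  have hre := (Complex.le_def.mp hdiff).1
  rw [Complex.sub_re] at hre
  rw [Complex.le_def] at h1 h2
  refine ⟨by simpa using h1.2.symm, by simpa using h2.2.symm, by simpa using hre⟩
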